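/- The map μ from unitary to doubly stochastic matrices is a submersion at the matrix u k l = (if k = l then 1 else 0) + (θ - 1)/n, where |θ| = 1, θ ≠ 1, θ ≠ -1: the real-linear map sending v to the real matrix (k,l) ↦ 2·Re(v k l * conj (u k l)), restricted to the real subspace {v : n×n complex matrices | v * uᴴ + u * vᴴ = 0}, has image equal to the full space {q : n×n real matrices | Σ_l q k l = 0 for every k, and Σ_k q k l = 0 for every l}. -/

import Mathlib

open Finset Matrix

/-- the map `μ : (u k l) ↦ (|u k l|²)` is a submersion at the unitary matrix
`u k l = δ_{kl} + (θ - 1)/n` (where `|θ| = 1`, `θ ≠ ±1`): the tangent map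
`v ↦ ((k,l) ↦ 2 Re (v k l * conj (u k l)))`, restricted to the tangent space
`{v | v * uᴴ + u * vᴴ = 0}` at `u` to the unitary group, has image equal to the whole
tangent space of the Birkhoff polytope, namely the space of real matrices all of whose row
sums and column sums vanish. -/
theorem stmt19 (n : ℕ) (hn : 1 ≤ n) (θ : ℂ)
    (hθ : ‖θ‖ = 1) (hθ1 : θ ≠ 1) (hθ2 : θ ≠ -1)
    (u : Matrix (Fin n) (Fin n) ℂ)
    (hu : ∀ k l, u k l = (if k = l then 1 else 0) + (θ - 1) / (n : ℂ)) :
    (fun v : Matrix (Fin n) (Fin n) ℂ =>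
        (Matrix.of fun k l => 2 * (v k l * (starRingEnd ℂ) (u k l)).re :
          Matrix (Fin n) (Fin n) ℝ)) ''
      {v : Matrix (Fin n) (Fin n) ℂ | v * uᴴ + u * vᴴ = 0} =
    {q : Matrix (Fin n) (Fin n) ℝ | (∀ k, ∑ l, q k l = 0) ∧ (∀ l, ∑ k, q k l = 0)} := by
  have hn0 : (n : ℂ) ≠ 0 := Nat.cast_ne_zero.mpr (by omega)
  have hnr : (n : ℝ) ≠ 0 := Nat.cast_ne_zero.mpr (by omega)
  set c : ℂ := (θ - 1) / (n : ℂ) with hc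
  have hmc : θ * (starRingEnd ℂ) θ = 1 := by
    rw [Complex.mul_conj, Complex.normSq_eq_norm_sq, hθ]; norm_num
  have hcsum : c + (starRingEnd ℂ) c + (n : ℂ) * (c * (starRingEnd ℂ) c) = 0 := by
    simp only [hc, map_div₀, map_sub, _root_.map_one, Complex.conj_natCast]
    field_simp
    linear_combination hmc
  -- u = 1 + c • J
  set J : Matrix (Fin n) (Fin n) ℂ := Matrix.of (fun _ _ => 1) with hJ
  have hu' : u = 1 + c • J := by
    ext k l; simp [hu k l, Matrix.one_apply, hJ]
  have hJH : Jᴴ = J := by ext k l; simp [hJ]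
  have hJJ : J * J = (n : ℂ) • J := by
    ext k l; simp [hJ, Matrix.mul_apply]
  have huH : uᴴ = 1 + (starRingEnd ℂ) c • J := by
    rw [hu', conjTranspose_add, conjTranspose_smul, conjTranspose_one, hJH]; rfl
  have key : ∀ (k l : Fin n), ∑ m, ((if k = m then (1:ℂ) else 0) + c)
      * ((if l = m then (1:ℂ) else 0) + (starRingEnd ℂ) c) = if k = l then 1 else 0 := by
    intro k l
    have expand : ∀ m : Fin n, ((if k = m then (1:ℂ) else 0) + c)
        * ((if l = m then (1:ℂ) else 0) + (starRingEnd ℂ) c)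
        = (if k = m then (if l = m then (1:ℂ) else 0) else 0)
          + (if k = m then (starRingEnd ℂ) c else 0)
          + (if l = m then c else 0) + c * (starRingEnd ℂ) c := by
      intro m; by_cases h1 : k = m <;> by_cases h2 : l = m <;> simp [h1, h2] <;> ring
    rw [Finset.sum_congr rfl fun m _ => expand m]
    rw [Finset.sum_add_distrib, Finset.sum_add_distrib, Finset.sum_add_distrib,
      Finset.sum_ite_eq Finset.univ k, Finset.sum_ite_eq Finset.univ k,
      Finset.sum_ite_eq Finset.univ l, Finset.sum_const]
    simp only [Finset.mem_univ, if_true, Finset.card_univ, Fintype.card_fin, nsmul_eq_mul]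
    have hswap : (if k = l then (1:ℂ) else 0) = if l = k then 1 else 0 := by
      by_cases h : k = l <;> simp [h, Ne.symm, eq_comm]
    rw [hswap]
    linear_combination hcsum
  have huu : u * uᴴ = 1 := by
    ext k l
    rw [Matrix.mul_apply]
    have : ∀ m, u k m * uᴴ m l = ((if k = m then (1:ℂ) else 0) + c)
        * ((if l = m then (1:ℂ) else 0) + (starRingEnd ℂ) c) := by
      intro m
      rw [conjTranspose_apply, hu k m, hu l m]
      simp [Complex.star_def, map_add, apply_ite]
    rw [Finset.sum_congr rfl fun m _ => this m, key k l, Matrix.one_apply]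
  have huu' : uᴴ * u = 1 := mul_eq_one_comm.mp huu
  ext q
  simp only [Set.mem_image, Set.mem_setOf_eq]
  constructor
  · rintro ⟨v, hv, rfl⟩
    constructor
    · intro k
      have h1 : (v * uᴴ) k k + (u * vᴴ) k k = 0 := by
        rw [← Matrix.add_apply, hv]; rfl
      have h2 : (u * vᴴ) k k = (starRingEnd ℂ) ((v * uᴴ) k k) := by
        have hvu : u * vᴴ = (v * uᴴ)ᴴ := by
          rw [conjTranspose_mul, conjTranspose_conjTranspose]
        rw [hvu]; rfl
      have h3 : ((v * uᴴ) k k).re = 0 := by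
        have := congrArg Complex.re h1
        simp only [Complex.add_re, h2, Complex.conj_re, Complex.zero_re] at this
        linarith
      have h4 : (v * uᴴ) k k = ∑ l, v k l * (starRingEnd ℂ) (u k l) := by
        rw [Matrix.mul_apply]; rfl
      calc ∑ l, (Matrix.of fun k l => 2 * (v k l * (starRingEnd ℂ) (u k l)).re) k l
          = 2 * ((v * uᴴ) k k).re := by
            rw [h4, Complex.re_sum, Finset.mul_sum]; rfl
        _ = 0 := by rw [h3]; ring
    · intro l
      have hv' : uᴴ * v + vᴴ * u = 0 := by
        have h := congrArg (fun m => uᴴ * m * u) hv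
        simp only [Matrix.mul_add, Matrix.add_mul, Matrix.mul_zero, Matrix.zero_mul] at h
        calc uᴴ * v + vᴴ * u = uᴴ * v * (uᴴ * u) + (uᴴ * u) * (vᴴ * u) := by
              rw [huu']; simp [Matrix.mul_assoc]
          _ = 0 := by
              rw [← h]; noncomm_ring [Matrix.mul_assoc]
      have h1 : (uᴴ * v) l l + (vᴴ * u) l l = 0 := by
        rw [← Matrix.add_apply, hv']; rfl
      have h2 : (vᴴ * u) l l = (starRingEnd ℂ) ((uᴴ * v) l l) := by
        have hvu : vᴴ * u = (uᴴ * v)ᴴ := by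
          rw [conjTranspose_mul, conjTranspose_conjTranspose]
        rw [hvu]; rfl
      have h3 : ((uᴴ * v) l l).re = 0 := by
        have := congrArg Complex.re h1
        simp only [Complex.add_re, h2, Complex.conj_re, Complex.zero_re] at this
        linarith
      have h4 : (uᴴ * v) l l = ∑ k, v k l * (starRingEnd ℂ) (u k l) := by
        rw [Matrix.mul_apply]
        exact Finset.sum_congr rfl fun k _ => by rw [conjTranspose_apply, mul_comm]; rfl
      calc ∑ k, (Matrix.of fun k l => 2 * (v k l * (starRingEnd ℂ) (u k l)).re) k l
          = 2 * ((uᴴ * v) l l).re := by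
            rw [h4, Complex.re_sum, Finset.mul_sum]; rfl
        _ = 0 := by rw [h3]; ring
  · rintro ⟨hrow, hcol⟩
    -- θ.im ≠ 0 and θ.re ≠ 1
    have hsq : θ.re ^ 2 + θ.im ^ 2 = 1 := by
      have h := Complex.sq_norm θ
      rw [hθ, Complex.normSq_apply] at h
      nlinarith [h]
    have him : θ.im ≠ 0 := by
      intro h
      rw [h] at hsq
      have : (θ.re - 1) * (θ.re + 1) = 0 := by nlinarith
      rcases mul_eq_zero.mp this with h' | h'
      · refine hθ1 (Complex.ext ?_ ?_) <;> simp [h] <;> linarith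
      · refine hθ2 (Complex.ext ?_ ?_) <;> simp [h] <;> linarith
    have hre1 : θ.re ≠ 1 := by
      intro h; rw [h] at hsq
      exact him (by nlinarith)
    have hcre : c.re = (θ.re - 1) / n := by
      rw [hc]
      rw [show ((n : ℂ)) = ((n : ℝ) : ℂ) by push_cast; ring, Complex.div_ofReal_re]
      simp
    have hcim : c.im = θ.im / n := by
      rw [hc]
      rw [show ((n : ℂ)) = ((n : ℝ) : ℂ) by push_cast; ring, Complex.div_ofReal_im]
      simp
    have hα : c.re ≠ 0 := by rw [hcre]; exact div_ne_zero (sub_ne_zero.mpr hre1) hnr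
    have hβ : c.im ≠ 0 := by rw [hcim]; exact div_ne_zero him hnr
    set w : Matrix (Fin n) (Fin n) ℂ := Matrix.of (fun k l =>
      (((q k l - q l k) / (4 * c.re) : ℝ) : ℂ)
        + (((q k l + q l k) / (4 * c.im) : ℝ) : ℂ) * Complex.I) with hw
    have hwrow : ∀ k, ∑ m, w k m = 0 := by
      intro k
      have h1 : ∑ m, (q k m - q m k) = (0 : ℝ) := by
        rw [Finset.sum_sub_distrib, hrow k, hcol k, sub_zero]
      have h2 : ∑ m, (q k m + q m k) = (0 : ℝ) := by
        rw [Finset.sum_add_distrib, hrow k, hcol k, add_zero]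
      simp only [hw, Matrix.of_apply]
      rw [Finset.sum_add_distrib, ← Finset.sum_mul, ← Complex.ofReal_sum, ← Complex.ofReal_sum,
        ← Finset.sum_div, ← Finset.sum_div, h1, h2]
      simp
    have hwskew : wᴴ = -w := by
      ext k l
      simp only [conjTranspose_apply, hw, Matrix.of_apply, Matrix.neg_apply, star_add, star_mul',
        Complex.star_def, Complex.conj_ofReal, Complex.conj_I]
      push_cast
      ring
    have hwu : ∀ k l, (w * u) k l = w k l := by
      intro k l
      rw [Matrix.mul_apply]
      have hterm : ∀ m, w k m * u m l = (if m = l then w k m else 0) + w k m * c := by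
        intro m; rw [hu m l]
        by_cases h : m = l <;> simp [h] <;> ring
      rw [Finset.sum_congr rfl (fun m _ => hterm m), Finset.sum_add_distrib,
        Finset.sum_ite_eq' Finset.univ l (w k), ← Finset.sum_mul, hwrow k, zero_mul, add_zero]
      simp
    refine ⟨w * u, ?_, ?_⟩
    · show (w * u) * uᴴ + u * (w * u)ᴴ = 0
      rw [Matrix.mul_assoc, huu, Matrix.mul_one, conjTranspose_mul, ← Matrix.mul_assoc, huu,
        Matrix.one_mul, hwskew]
      exact add_neg_cancel w
    · ext k l
      show 2 * ((w * u) k l * (starRingEnd ℂ) (u k l)).re = q k l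
      rw [hwu k l, hu k l]
      by_cases hkl : k = l
      · subst hkl
        simp only [hw, Matrix.of_apply, if_pos rfl, if_true, sub_self, zero_div, Complex.ofReal_zero,
          zero_add, map_add, _root_.map_one]
        simp only [Complex.mul_re, Complex.add_re, Complex.add_im, Complex.one_re, Complex.one_im,
          Complex.mul_im, Complex.ofReal_re, Complex.ofReal_im, Complex.I_re, Complex.I_im,
          Complex.conj_re, Complex.conj_im]
        field_simp
        ring
      · simp only [hw, Matrix.of_apply, if_neg hkl, zero_add, map_add]
        simp only [Complex.mul_re, Complex.add_re, Complex.add_im, Complex.mul_im,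
          Complex.ofReal_re, Complex.ofReal_im, Complex.I_re, Complex.I_im,
          Complex.conj_re, Complex.conj_im]
        field_simp
        ring
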